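/- Let S be a cancellative monoid in which any two principal left ideals intersect (right Ore / left reversible condition: Sp ∩ Sq ≠ ∅ for all p, q). Then S embeds into a group G with G = S⁻¹S (Ore–Dubreil theorem, embeddability direction). -/
import Mathlib

/-- Ore–Dubreil: a cancellative monoid in which any two principal left ideals
intersect embeds into a group `G` of left quotients, `G = S⁻¹S`. -/
theorem stmt15 {S : Type} [Monoid S]
    (hl : ∀ a b c : S, a * b = a * c → b = c)
    (hr : ∀ a b c : S, b * a = c * a → b = c)
    (hOre : ∀ p q : S, ∃ r s : S, r * p = s * q) :
    ∃ (G : Type) (_ : Group G) (φ : S →* G),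
      Function.Injective φ ∧ ∀ g : G, ∃ s t : S, g = (φ s)⁻¹ * φ t := by
  classical
  letI : OreLocalization.OreSet (⊤ : Submonoid S) :=
    { ore_right_cancel := fun r₁ r₂ s h => ⟨1, by simpa using hr s r₁ r₂ h⟩
      oreNum := fun r s => (hOre r s).choose_spec.choose
      oreDenom := fun r s => ⟨(hOre r s).choose, trivial⟩
      ore_eq := fun r s => (hOre r s).choose_spec.choose_spec }
  let G := OreLocalization (⊤ : Submonoid S) S
  have hunit : ∀ g : G, IsUnit g := by
    apply OreLocalization.ind
    intro r s
    have e1 : ((1 : (⊤ : Submonoid S)) : S) /ₒ s * ((s : S) /ₒ (1 : (⊤ : Submonoid S))) = (1 : G) :=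
      OreLocalization.mul_inv (R := S) (S := ⊤) 1 s
    have e2 : ((s : S) /ₒ (1 : (⊤ : Submonoid S))) * (((1 : (⊤ : Submonoid S)) : S) /ₒ s) = (1 : G) :=
      OreLocalization.mul_inv (R := S) (S := ⊤) s 1
    have h1 : IsUnit ((1 : S) /ₒ s : G) := ⟨⟨_, _, e1, e2⟩, rfl⟩
    have h2 : IsUnit (r /ₒ (1 : (⊤ : Submonoid S)) : G) := by
      simpa using OreLocalization.numerator_isUnit (R := S) (S := ⊤) ⟨r, trivial⟩
    have : ((1 : S) /ₒ s : G) * (r /ₒ 1) = r /ₒ s := by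
      rw [OreLocalization.one_div_mul, one_mul]
    rw [← this]
    exact h1.mul h2
  letI : Group G := groupOfIsUnit hunit
  refine ⟨G, inferInstance, OreLocalization.numeratorHom, ?_, ?_⟩
  · intro a b h
    rw [OreLocalization.numeratorHom_apply, OreLocalization.numeratorHom_apply,
      OreLocalization.oreDiv_eq_iff] at h
    obtain ⟨u, v, h1, h2⟩ := h
    simp only [Submonoid.smul_def, smul_eq_mul, OneMemClass.coe_one, mul_one] at h1 h2
    exact (hl u b a (h1.trans (by rw [h2]))).symm
  · apply OreLocalization.ind
    intro r s
    refine ⟨(s : S), r, ?_⟩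
    have hinv : (OreLocalization.numeratorHom (s : S) : G)⁻¹ = (1 : S) /ₒ s := by
      apply inv_eq_of_mul_eq_one_right
      rw [OreLocalization.numeratorHom_apply]
      exact OreLocalization.mul_inv (R := S) (S := ⊤) s 1
    rw [hinv, OreLocalization.numeratorHom_apply, OreLocalization.one_div_mul, one_mul]
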